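/- On state space {1,…,N} with energies λ_1 ≤ … ≤ λ_N, inverse temperature β ≥ 0, and Gibbs distribution π_i = e^{−βλ_i}/Z(β) with Z(β) = ∑_i e^{−βλ_i}, consider the Metropolis–Hastings chain with p_{ij} = (1/(2N)) min(1, e^{−β(λ_j − λ_i)}) for i ≠ j and p_{ii} = 1 − ∑_{j≠i} p_{ij}. Then the spectral gap of this chain is at least (1/(2N)) ∑_{i=1}^N e^{−β(λ_i − λ_1)}. -/

import Mathlib

open Finset

/-- The Gibbs distribution `π_i = e^{−βλ_i}/Z(β)` on `{1,…,N}`. -/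
noncomputable def gibbsDist {N : ℕ} (lam : Fin N → ℝ) (β : ℝ) (i : Fin N) : ℝ :=
  Real.exp (-(β * lam i)) / ∑ k, Real.exp (-(β * lam k))

/-- The Metropolis–Hastings transition probabilities
`p_{ij} = (1/(2N)) min(1, e^{−β(λ_j−λ_i)})` for `i ≠ j`, `p_{ii} = 1 − ∑_{j≠i} p_{ij}`. -/
noncomputable def metropolisP {N : ℕ} (lam : Fin N → ℝ) (β : ℝ) (i j : Fin N) : ℝ :=
  if i = j then
    1 - ∑ k ∈ univ.erase i, (1 / (2 * N)) * min 1 (Real.exp (-(β * (lam k - lam i))))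
  else (1 / (2 * N)) * min 1 (Real.exp (-(β * (lam j - lam i))))

/-- For energies `λ_1 ≤ … ≤ λ_N` and inverse temperature `β ≥ 0`, the
spectral gap of the Metropolis–Hastings chain is at least
`(1/(2N)) ∑_{i=1}^N e^{−β(λ_i − λ_1)}`: every eigenvalue `μ` of the transition matrix
with eigenfunction orthogonal to constants in `ℓ²(π)` satisfies `μ ≤ 1` minus this bound. -/
theorem metropolis_spectral_gap_lower_bound
    {N : ℕ} [NeZero N] (lam : Fin N → ℝ) (hmono : Monotone lam)
    (β : ℝ) (hβ : 0 ≤ β)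
    (μ : ℝ) (v : Fin N → ℝ) (hv : v ≠ 0)
    (horth : ∑ i, gibbsDist lam β i * v i = 0)
    (heig : ∀ i, ∑ j, metropolisP lam β i j * v j = μ * v i) :
    μ ≤ 1 - (1 / (2 * N)) * ∑ i, Real.exp (-(β * (lam i - lam 0))) := by
  have hNpos : (0:ℝ) < N := by exact_mod_cast Nat.pos_of_ne_zero (NeZero.ne N)
  set Z := ∑ k, Real.exp (-(β * lam k)) with hZ
  have hZpos : 0 < Z := Finset.sum_pos (fun k _ => Real.exp_pos _) ⟨0, mem_univ _⟩
  set c := (1 / (2 * (N:ℝ))) * ∑ i, Real.exp (-(β * (lam i - lam 0))) with hc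
  have hlam0 : ∀ i : Fin N, lam 0 ≤ lam i := fun i => hmono (Fin.zero_le i)
  have hsum : ∑ i, Real.exp (-(β * (lam i - lam 0))) = Z * Real.exp (β * lam 0) := by
    rw [hZ, Finset.sum_mul]
    refine Finset.sum_congr rfl fun i _ => ?_
    rw [← Real.exp_add]; ring_nf
  have hπ : ∀ j, c * gibbsDist lam β j
      = (1 / (2 * (N:ℝ))) * Real.exp (-(β * (lam j - lam 0))) := by
    intro j
    rw [hc, hsum, gibbsDist, ← hZ]
    field_simp
    have he : Real.exp (β * lam 0) * Real.exp (-(β * lam j))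
        = Real.exp (-(β * (lam j - lam 0))) := by rw [← Real.exp_add]; ring_nf
    linear_combination he
  have hπsum : ∑ j, gibbsDist lam β j = 1 := by
    simp only [gibbsDist, ← hZ, ← Finset.sum_div]
    exact div_self hZpos.ne'
  -- entrywise bound
  have hmin_le : ∀ i j : Fin N, (0:ℝ) ≤ min 1 (Real.exp (-(β * (lam j - lam i)))) ∧
      min 1 (Real.exp (-(β * (lam j - lam i)))) ≤ 1 :=
    fun i j => ⟨le_min zero_le_one (Real.exp_pos _).le, min_le_left _ _⟩
  have hfrac : (0:ℝ) < 1 / (2 * N) := by positivity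
  have hkey : ∀ i j, c * gibbsDist lam β j ≤ metropolisP lam β i j := by
    intro i j
    rw [hπ j, metropolisP]
    by_cases hij : i = j
    · rw [if_pos hij]
      have h1 : ∑ k ∈ univ.erase i, (1 / (2 * (N:ℝ))) * min 1 (Real.exp (-(β * (lam k - lam i))))
          ≤ ∑ _k ∈ univ.erase i, (1 / (2 * (N:ℝ))) := by
        refine Finset.sum_le_sum fun k _ => ?_
        calc (1 / (2 * (N:ℝ))) * min 1 (Real.exp (-(β * (lam k - lam i))))
            ≤ (1 / (2 * (N:ℝ))) * 1 := by
              exact mul_le_mul_of_nonneg_left (hmin_le i k).2 hfrac.le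
          _ = 1 / (2 * (N:ℝ)) := mul_one _
      have hcard : ((univ.erase i).card : ℝ) = (N:ℝ) - 1 := by
        rw [Finset.card_erase_of_mem (mem_univ i), Finset.card_univ, Fintype.card_fin]
        have : 1 ≤ N := Nat.one_le_iff_ne_zero.mpr (NeZero.ne N)
        push_cast [this]
        ring
      have h2 : ∑ _k ∈ univ.erase i, (1 / (2 * (N:ℝ))) = ((N:ℝ) - 1) * (1 / (2*N)) := by
        rw [Finset.sum_const, nsmul_eq_mul, hcard]
      have hexp1 : Real.exp (-(β * (lam j - lam 0))) ≤ 1 := by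
        rw [Real.exp_le_one_iff]
        have := hlam0 j
        nlinarith
      have : (1 / (2 * (N:ℝ))) * Real.exp (-(β * (lam j - lam 0))) ≤ 1 / (2 * N) := by
        nlinarith [hfrac]
      calc (1 / (2 * (N:ℝ))) * Real.exp (-(β * (lam j - lam 0))) ≤ 1 / (2 * N) := this
        _ ≤ 1 - ((N:ℝ) - 1) * (1 / (2*N)) := by
            rw [div_le_iff₀ (by positivity), sub_mul, one_mul]
            have : ((N:ℝ) - 1) * (1 / (2*N)) * (2*N) = (N:ℝ) - 1 := by
              field_simp
            rw [this]
            linarith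
        _ ≤ 1 - ∑ k ∈ univ.erase i, (1 / (2 * (N:ℝ))) * min 1 (Real.exp (-(β * (lam k - lam i)))) := by
            rw [h2] at h1; linarith
    · rw [if_neg hij]
      refine mul_le_mul_of_nonneg_left ?_ hfrac.le
      refine le_min ?_ ?_
      · rw [Real.exp_le_one_iff]
        have := hlam0 j
        nlinarith
      · apply Real.exp_le_exp.mpr
        have := hlam0 i
        nlinarith
  -- row sums
  have hrow : ∀ i, ∑ j, metropolisP lam β i j = 1 := by
    intro i
    rw [← Finset.add_sum_erase _ _ (mem_univ i)]
    have h1 : metropolisP lam β i i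
        = 1 - ∑ k ∈ univ.erase i, (1 / (2 * (N:ℝ))) * min 1 (Real.exp (-(β * (lam k - lam i)))) := by
      rw [metropolisP, if_pos rfl]
    have h2 : ∑ j ∈ univ.erase i, metropolisP lam β i j
        = ∑ k ∈ univ.erase i, (1 / (2 * (N:ℝ))) * min 1 (Real.exp (-(β * (lam k - lam i)))) := by
      refine Finset.sum_congr rfl fun j hj => ?_
      rw [metropolisP, if_neg (Ne.symm (Finset.ne_of_mem_erase hj))]
    rw [h1, h2]; ring
  -- pick maximizing index
  obtain ⟨i, -, hi⟩ := Finset.exists_max_image univ (fun i => |v i|) ⟨0, mem_univ 0⟩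
  have hvi : 0 < |v i| := by
    obtain ⟨j, hj⟩ := Function.ne_iff.mp hv
    have : 0 < |v j| := abs_pos.mpr hj
    exact lt_of_lt_of_le this (hi j (mem_univ j))
  have hkey2 : μ * v i = ∑ j, (metropolisP lam β i j - c * gibbsDist lam β j) * v j := by
    have : ∑ j, (metropolisP lam β i j - c * gibbsDist lam β j) * v j
        = (∑ j, metropolisP lam β i j * v j) - c * ∑ j, gibbsDist lam β j * v j := by
      rw [Finset.mul_sum, ← Finset.sum_sub_distrib]
      refine Finset.sum_congr rfl fun j _ => by ring
    rw [this, horth, heig i]; ring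
  have habs : |μ| * |v i| ≤ (1 - c) * |v i| := by
    rw [← abs_mul, hkey2]
    calc |∑ j, (metropolisP lam β i j - c * gibbsDist lam β j) * v j|
        ≤ ∑ j, |(metropolisP lam β i j - c * gibbsDist lam β j) * v j| :=
          Finset.abs_sum_le_sum_abs _ _
      _ ≤ ∑ j, (metropolisP lam β i j - c * gibbsDist lam β j) * |v i| := by
          refine Finset.sum_le_sum fun j _ => ?_
          rw [abs_mul, abs_of_nonneg (sub_nonneg.mpr (hkey i j))]
          exact mul_le_mul_of_nonneg_left (hi j (mem_univ j))
            (sub_nonneg.mpr (hkey i j))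
      _ = (1 - c) * |v i| := by
          rw [← Finset.sum_mul, Finset.sum_sub_distrib, hrow i, ← Finset.mul_sum, hπsum,
            mul_one]
  have hμabs : |μ| ≤ 1 - c := le_of_mul_le_mul_right habs hvi
  calc μ ≤ |μ| := le_abs_self μ
    _ ≤ 1 - c := hμabs
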